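/- Suppose there exist P ≻ 0, Y, and ε > 0 satisfying the Lipschitz observer LMI: [[AᵀP + PA − CᵀYᵀ − YC + εγ_l²I, PG],[GᵀP, −εI]] ≺ 0. Then with L := P⁻¹Y, the function V(e) = eᵀPe is a Lyapunov function for the error dynamics ė = (A − LC)e + G(f(x) − f(x̂)), i.e., along trajectories with ‖f(x) − f(x̂)‖₂ ≤ γ_l‖e‖₂ one has V̇(e) < 0 for all e ≠ 0. -/

import Mathlib

open Matrix

theorem lmi_implies_lyapunov_decrease {n g p : ℕ}
    (A : Matrix (Fin n) (Fin n) ℝ) (G : Matrix (Fin n) (Fin g) ℝ)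
    (C : Matrix (Fin p) (Fin n) ℝ) (P : Matrix (Fin n) (Fin n) ℝ)
    (Y : Matrix (Fin n) (Fin p) ℝ) (ε γl : ℝ)
    (hP : P.PosDef) (hε : 0 < ε) (hγ : 0 ≤ γl)
    (hLMI : (-(Matrix.fromBlocks
        (Aᵀ * P + P * A - Cᵀ * Yᵀ - Y * C + (ε * γl ^ 2) • (1 : Matrix (Fin n) (Fin n) ℝ))
        (P * G) (Gᵀ * P) (-(ε • (1 : Matrix (Fin g) (Fin g) ℝ))))).PosDef)
    (L : Matrix (Fin n) (Fin p) ℝ) (hL : L = P⁻¹ * Y) :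
    ∀ e : Fin n → ℝ, e ≠ 0 → ∀ Δ : Fin g → ℝ,
      Real.sqrt (∑ i, Δ i ^ 2) ≤ γl * Real.sqrt (∑ i, e i ^ 2) →
      e ⬝ᵥ (((A - L * C)ᵀ * P + P * (A - L * C)) *ᵥ e) +
        2 * (e ⬝ᵥ ((P * G) *ᵥ Δ)) < 0 := by
  intro e he Δ hΔ
  have hPinv : P * P⁻¹ = 1 := Matrix.mul_nonsing_inv P (isUnit_iff_ne_zero.mpr hP.det_pos.ne')
  have hPL : P * L = Y := by
    rw [hL, ← Matrix.mul_assoc, hPinv, Matrix.one_mul]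
  have hPsymm : Pᵀ = P := hP.1
  have hLP : Lᵀ * P = Yᵀ := by
    have h := congrArg Matrix.transpose hPL
    rwa [Matrix.transpose_mul, hPsymm] at h
  -- rewrite the closed-loop term
  have hterm : (A - L * C)ᵀ * P + P * (A - L * C)
      = Aᵀ * P + P * A - Cᵀ * Yᵀ - Y * C := by
    have : (A - L * C)ᵀ = Aᵀ - Cᵀ * Lᵀ := by
      rw [Matrix.transpose_sub, Matrix.transpose_mul]
    rw [this, Matrix.sub_mul, Matrix.mul_sub, Matrix.mul_assoc, hLP,
      ← Matrix.mul_assoc, hPL]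
    abel
  set M11 : Matrix (Fin n) (Fin n) ℝ :=
    Aᵀ * P + P * A - Cᵀ * Yᵀ - Y * C + (ε * γl ^ 2) • (1 : Matrix (Fin n) (Fin n) ℝ) with hM11
  set z : Fin n ⊕ Fin g → ℝ := Sum.elim e Δ with hz
  have hzne : z ≠ 0 := by
    intro h
    apply he
    funext i
    have := congrFun h (Sum.inl i)
    simpa [z] using this
  have hquad := hLMI.dotProduct_mulVec_pos hzne
  rw [Matrix.neg_mulVec, dotProduct_neg] at hquad
  have hquad' : star z ⬝ᵥ ((Matrix.fromBlocks M11 (P * G) (Gᵀ * P)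
      (-(ε • (1 : Matrix (Fin g) (Fin g) ℝ)))) *ᵥ z) < 0 := by
    have := hquad
    linarith [this]
  have hstar : (star z : Fin n ⊕ Fin g → ℝ) = z := by
    funext i; simp [z]
  rw [hstar] at hquad'
  rw [hz, Matrix.fromBlocks_mulVec, sumElim_dotProduct_sumElim] at hquad'
  simp only [Sum.elim_comp_inl, Sum.elim_comp_inr] at hquad'
  have hcross : Δ ⬝ᵥ ((Gᵀ * P) *ᵥ e) = e ⬝ᵥ ((P * G) *ᵥ Δ) := by
    rw [show Gᵀ * P = (P * G)ᵀ by rw [Matrix.transpose_mul, hPsymm],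
      Matrix.dotProduct_mulVec, Matrix.vecMul_transpose, dotProduct_comm]
  have hee : e ⬝ᵥ e = ∑ i, e i ^ 2 := by
    simp [dotProduct, pow_two]
  have hΔΔ : Δ ⬝ᵥ Δ = ∑ i, Δ i ^ 2 := by
    simp [dotProduct, pow_two]
  have hexpand : e ⬝ᵥ ((M11 *ᵥ e) + (P * G) *ᵥ Δ) + Δ ⬝ᵥ ((Gᵀ * P) *ᵥ e + (-(ε • (1 : Matrix (Fin g) (Fin g) ℝ))) *ᵥ Δ)
      = e ⬝ᵥ ((Aᵀ * P + P * A - Cᵀ * Yᵀ - Y * C) *ᵥ e)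
        + 2 * (e ⬝ᵥ ((P * G) *ᵥ Δ))
        + ε * γl ^ 2 * (∑ i, e i ^ 2) - ε * (∑ i, Δ i ^ 2) := by
    rw [dotProduct_add, dotProduct_add, hcross, hM11,
      Matrix.add_mulVec, dotProduct_add, Matrix.smul_mulVec,
      Matrix.one_mulVec, dotProduct_smul, Matrix.neg_mulVec,
      dotProduct_neg, Matrix.smul_mulVec, Matrix.one_mulVec,
      dotProduct_smul, hee, hΔΔ]
    simp only [smul_eq_mul]
    ring
  rw [hexpand] at hquad'
  -- the S-procedure bound
  have hsum_e : 0 ≤ ∑ i, e i ^ 2 := Finset.sum_nonneg fun i _ => sq_nonneg _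
  have hsum_Δ : 0 ≤ ∑ i, Δ i ^ 2 := Finset.sum_nonneg fun i _ => sq_nonneg _
  have hS : ∑ i, Δ i ^ 2 ≤ γl ^ 2 * ∑ i, e i ^ 2 := by
    have h1 : (Real.sqrt (∑ i, Δ i ^ 2)) ^ 2 ≤ (γl * Real.sqrt (∑ i, e i ^ 2)) ^ 2 := by
      apply pow_le_pow_left₀ (Real.sqrt_nonneg _) hΔ
    rwa [Real.sq_sqrt hsum_Δ, mul_pow, Real.sq_sqrt hsum_e] at h1
  rw [hterm]
  nlinarith [hquad', mul_le_mul_of_nonneg_left hS hε.le]
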